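/- Define on L²(ℝ)ⁿ the operators T(f₁,...,fₙ) = (z₁ f₁(·−1), ..., zₙ fₙ(·−1)) and U(f₁,...,fₙ) = (U₀ f_{σ(1)}, ..., U₀ f_{σ(n)}) where U₀f(x) = N^{-1/2} f(x/N), σ is a permutation of {1,...,n}, and z₁,...,zₙ ∈ 𝕋 satisfy zₖ^N = z_{σ(k)}. Then U and T are unitary and satisfy U T U^{-1} = T^N. -/

import Mathlib

open MeasureTheory

/-- The translation `T(f₁,…,fₙ) = (z₁ f₁(·−1), …, zₙ fₙ(·−1))` on `L²(ℝ)ⁿ`. -/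
noncomputable def transOp {n : ℕ} (z : Fin n → ℂ) (f : Fin n → ℝ → ℂ) :
    Fin n → ℝ → ℂ :=
  fun i x => z i * f i (x - 1)

/-- The dilation `U(f₁,…,fₙ) = (U₀ f_{σ(1)}, …, U₀ f_{σ(n)})`, `U₀g(x) = N^{-1/2} g(x/N)`. -/
noncomputable def dilOp {n : ℕ} (N : ℕ) (σ : Equiv.Perm (Fin n)) (f : Fin n → ℝ → ℂ) :
    Fin n → ℝ → ℂ :=
  fun i x => ((Real.sqrt N : ℂ))⁻¹ * f (σ i) (x / N)

lemma transOp_iterate {n : ℕ} (z : Fin n → ℂ) (f : Fin n → ℝ → ℂ) (m : ℕ) (i : Fin n) (x : ℝ) :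
    (transOp z)^[m] f i x = z i ^ m * f i (x - m) := by
  induction m generalizing f x with
  | zero => simp
  | succ k ih =>
    rw [Function.iterate_succ_apply, ih (transOp z f)]
    simp only [transOp]
    push_cast
    ring_nf

/-- With `N ≥ 2`, `σ` a permutation of `{1,…,n}` and `z₁,…,zₙ` on the unit
circle satisfying `zₖ^N = z_{σ(k)}`, the operators `T` and `U` above are unitary on
`L²(ℝ)ⁿ` — they are bijective and preserve the `L²(ℝ)ⁿ` norm
`‖f‖² = ∑ᵢ ∫ |fᵢ|²` — and they satisfy the commutation relation `U T U⁻¹ = Tᴺ`,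
equivalently `U ∘ T = Tᴺ ∘ U`. -/
theorem stmt_15 {n : ℕ} (N : ℕ) (hN : 2 ≤ N) (σ : Equiv.Perm (Fin n))
    (z : Fin n → ℂ) (hz : ∀ k, ‖z k‖ = 1) (hcyc : ∀ k, z k ^ N = z (σ k)) :
    Function.Bijective (transOp z) ∧ Function.Bijective (dilOp N σ) ∧
    (∀ f : Fin n → ℝ → ℂ,
      ∑ i : Fin n, ∫⁻ x : ℝ, (‖transOp z f i x‖₊ : ENNReal) ^ 2
        = ∑ i : Fin n, ∫⁻ x : ℝ, (‖f i x‖₊ : ENNReal) ^ 2) ∧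
    (∀ f : Fin n → ℝ → ℂ,
      ∑ i : Fin n, ∫⁻ x : ℝ, (‖dilOp N σ f i x‖₊ : ENNReal) ^ 2
        = ∑ i : Fin n, ∫⁻ x : ℝ, (‖f i x‖₊ : ENNReal) ^ 2) ∧
    dilOp N σ ∘ transOp z = (transOp z)^[N] ∘ dilOp N σ := by
  have hNR : (0:ℝ) < (N:ℝ) := by positivity
  have hN0 : (N:ℝ) ≠ 0 := hNR.ne'
  have hzne : ∀ k, z k ≠ 0 := fun k => by
    intro h; have := hz k; rw [h] at this; simp at this
  have hsq : Real.sqrt N ≠ 0 := by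
    simp [Real.sqrt_eq_zero', hN0, not_le, hNR]
  have hsqC : ((Real.sqrt N : ℝ) : ℂ) ≠ 0 := by exact_mod_cast hsq
  refine ⟨?_, ?_, ?_, ?_, ?_⟩
  · -- transOp bijective
    have : Function.LeftInverse (fun f : Fin n → ℝ → ℂ => fun i x => (z i)⁻¹ * f i (x + 1))
        (transOp z) ∧ Function.RightInverse (fun f : Fin n → ℝ → ℂ => fun i x => (z i)⁻¹ * f i (x + 1))
        (transOp z) := by
      constructor
      · intro f; funext i x
        simp [transOp, ← mul_assoc, inv_mul_cancel₀ (hzne i)]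
      · intro f; funext i x
        simp [transOp, ← mul_assoc, mul_inv_cancel₀ (hzne i)]
    exact Function.bijective_iff_has_inverse.mpr ⟨_, this.1, this.2⟩
  · -- dilOp bijective
    have : Function.LeftInverse (fun f : Fin n → ℝ → ℂ => fun i x => (Real.sqrt N : ℂ) * f (σ⁻¹ i) (x * N))
        (dilOp N σ) ∧ Function.RightInverse (fun f : Fin n → ℝ → ℂ => fun i x => (Real.sqrt N : ℂ) * f (σ⁻¹ i) (x * N))
        (dilOp N σ) := by
      constructor
      · intro f; funext i x
        simp [dilOp, ← mul_assoc, mul_inv_cancel₀ hsqC, mul_div_cancel_right₀ _ hN0]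
      · intro f; funext i x
        simp [dilOp, ← mul_assoc, inv_mul_cancel₀ hsqC, div_mul_cancel₀ _ hN0]
    exact Function.bijective_iff_has_inverse.mpr ⟨_, this.1, this.2⟩
  · -- transOp preserves norm
    intro f
    refine Finset.sum_congr rfl fun i _ => ?_
    have hzi : (‖z i‖₊ : ENNReal) = 1 := by
      have : ‖z i‖₊ = 1 := by ext; simpa using hz i
      rw [this]; rfl
    calc ∫⁻ x : ℝ, (‖transOp z f i x‖₊ : ENNReal) ^ 2
        = ∫⁻ x : ℝ, (‖f i (x - 1)‖₊ : ENNReal) ^ 2 := by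
          simp only [transOp, nnnorm_mul, ENNReal.coe_mul, mul_pow, hzi, one_pow, one_mul]
      _ = ∫⁻ x : ℝ, (‖f i x‖₊ : ENNReal) ^ 2 :=
          lintegral_sub_right_eq_self (fun x => (‖f i x‖₊ : ENNReal) ^ 2) 1
  · -- dilOp preserves norm
    intro f
    have key : ∀ g : ℝ → ℂ,
        ∫⁻ x : ℝ, (‖((Real.sqrt N : ℂ))⁻¹ * g (x / N)‖₊ : ENNReal) ^ 2
          = ∫⁻ x : ℝ, (‖g x‖₊ : ENNReal) ^ 2 := by
      intro g
      have hscale : ∫⁻ x : ℝ, (‖g (x / N)‖₊ : ENNReal) ^ 2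
          = ENNReal.ofReal N * ∫⁻ x : ℝ, (‖g x‖₊ : ENNReal) ^ 2 := by
        have hinv : ((N:ℝ)⁻¹) ≠ 0 := inv_ne_zero hN0
        calc ∫⁻ x : ℝ, (‖g (x / N)‖₊ : ENNReal) ^ 2
            = ∫⁻ x : ℝ, (‖g (x * (N:ℝ)⁻¹)‖₊ : ENNReal) ^ 2 := by
              simp_rw [div_eq_mul_inv]
          _ = ∫⁻ y, (‖g y‖₊ : ENNReal) ^ 2
                ∂(Measure.map (· * ((N:ℝ)⁻¹)) volume) := by
              exact (lintegral_map_equiv (fun y => (‖g y‖₊ : ENNReal) ^ 2)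
                (Homeomorph.mulRight₀ ((N:ℝ)⁻¹) hinv).toMeasurableEquiv).symm
          _ = ENNReal.ofReal N * ∫⁻ x : ℝ, (‖g x‖₊ : ENNReal) ^ 2 := by
              rw [Real.map_volume_mul_right hinv, lintegral_smul_measure, inv_inv,
                abs_of_pos hNR, smul_eq_mul]
      calc ∫⁻ x : ℝ, (‖((Real.sqrt N : ℂ))⁻¹ * g (x / N)‖₊ : ENNReal) ^ 2
          = (‖((Real.sqrt N : ℂ))⁻¹‖₊ : ENNReal) ^ 2
              * ∫⁻ x : ℝ, (‖g (x / N)‖₊ : ENNReal) ^ 2 := by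
            rw [← lintegral_const_mul' _ _ (by simp : ((‖((Real.sqrt N : ℂ))⁻¹‖₊ : ENNReal) ^ 2) ≠ ⊤)]
            simp [nnnorm_mul, mul_pow]
        _ = (‖((Real.sqrt N : ℂ))⁻¹‖₊ : ENNReal) ^ 2 * ENNReal.ofReal N
              * ∫⁻ x : ℝ, (‖g x‖₊ : ENNReal) ^ 2 := by rw [hscale, mul_assoc]
        _ = ∫⁻ x : ℝ, (‖g x‖₊ : ENNReal) ^ 2 := by
            have : (‖((Real.sqrt N : ℂ))⁻¹‖₊ : ENNReal) ^ 2 * ENNReal.ofReal N = 1 := by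
              rw [← enorm_eq_nnnorm, ← ofReal_norm, ← ENNReal.ofReal_pow (norm_nonneg _),
                ← ENNReal.ofReal_mul (by positivity)]
              rw [show ‖((Real.sqrt N : ℂ))⁻¹‖ = (Real.sqrt N)⁻¹ by
                simp [norm_inv, Complex.norm_real, Real.norm_eq_abs,
                  abs_of_nonneg (Real.sqrt_nonneg _)]]
              rw [show ((Real.sqrt N)⁻¹) ^ 2 * (N:ℝ) = 1 by
                rw [inv_pow, Real.sq_sqrt hNR.le]; field_simp]
              exact ENNReal.ofReal_one
            rw [this, one_mul]
    calc ∑ i : Fin n, ∫⁻ x : ℝ, (‖dilOp N σ f i x‖₊ : ENNReal) ^ 2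
        = ∑ i : Fin n, ∫⁻ x : ℝ, (‖f (σ i) x‖₊ : ENNReal) ^ 2 := by
          refine Finset.sum_congr rfl fun i _ => ?_
          exact key (f (σ i))
      _ = ∑ i : Fin n, ∫⁻ x : ℝ, (‖f i x‖₊ : ENNReal) ^ 2 :=
          Equiv.sum_comp σ (fun i => ∫⁻ x : ℝ, (‖f i x‖₊ : ENNReal) ^ 2)
  · -- commutation
    funext f
    funext i x
    simp only [Function.comp_apply, transOp_iterate, dilOp, transOp, hcyc i]
    rw [show (x - (N:ℝ)) / N = x / N - 1 by field_simp]
    ring
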